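/- Let X be an ℝ^m-valued random field on ℝ^d that is continuous in probability and proper (for every t ≠ 0 the distribution of X(t) is full, i.e. not supported on any proper affine hyperplane of ℝ^m). Suppose there exist a real d×d matrix E, all of whose complex eigenvalues have positive real part, and a function f : (0,∞) → GL(ℝ^m) such that for all k and all t₁,...,t_k ∈ ℝ^d, the random vectors (f(r)Y(r^E t₁),...,f(r)Y(r^E t_k)) converge in distribution to (X(t₁),...,X(t_k)) as r → ∞, where r^E = exp((ln r)·E) and Y is an ℝ^m-valued random field on ℝ^d. Then X is operator self-similar with time-scaling exponent E: for every r > 0 there exists a linear operator B(r) on ℝ^m such that {X(r^E t), t ∈ ℝ^d} =_{f.d.d.} {B(r)X(t), t ∈ ℝ^d}. -/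

import Mathlib

open MeasureTheory Filter Topology

open scoped ENNReal NNReal

set_option linter.unusedSectionVars false
section aux
variable {W : Type*} [NormedAddCommGroup W] [NormedSpace ℝ W]
  [MeasurableSpace W] [BorelSpace W] [FiniteDimensional ℝ W]

/-- Tails of a probability measure are small. -/
lemma aux_tail (μ : ProbabilityMeasure W) {ε : ℝ≥0∞} (hε : 0 < ε) :
    ∃ M : ℝ, 0 < M ∧ (μ : Measure W) {x | M ≤ ‖x‖} < ε := by
  have hanti : Antitone (fun n : ℕ => {x : W | (n : ℝ) ≤ ‖x‖}) := by
    intro a b hab x hx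
    have hx' : (b : ℝ) ≤ ‖x‖ := hx
    show (a : ℝ) ≤ ‖x‖
    exact le_trans (by exact_mod_cast hab) hx'
  have hmeas : ∀ n : ℕ, NullMeasurableSet {x : W | (n : ℝ) ≤ ‖x‖} (μ : Measure W) := by
    intro n
    exact (isClosed_le continuous_const continuous_norm).measurableSet.nullMeasurableSet
  have hfin : ∃ n : ℕ, (μ : Measure W) {x : W | (n : ℝ) ≤ ‖x‖} ≠ ∞ := ⟨0, measure_ne_top _ _⟩
  have hlim := tendsto_measure_iInter_atTop hmeas hanti hfin
  have hempty : (⋂ n : ℕ, {x : W | (n : ℝ) ≤ ‖x‖}) = ∅ := by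
    ext x
    simp only [Set.mem_iInter, Set.mem_setOf_eq, Set.mem_empty_iff_false, iff_false, not_forall,
      not_le]
    obtain ⟨n, hn⟩ := exists_nat_gt ‖x‖
    exact ⟨n, hn⟩
  rw [hempty] at hlim
  simp only [measure_empty] at hlim
  have := (hlim.eventually_lt_const hε).exists
  obtain ⟨n, hn⟩ := this
  refine ⟨(n : ℝ) + 1, by positivity, ?_⟩
  refine lt_of_le_of_lt (measure_mono ?_) hn
  intro x hx
  have hx' : (n : ℝ) + 1 ≤ ‖x‖ := hx
  show (n : ℝ) ≤ ‖x‖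
  linarith

/-- Portmanteau: eventual bound on closed sets. -/
lemma aux_ev {μs : ℕ → ProbabilityMeasure W} {μ : ProbabilityMeasure W}
    (h : Tendsto μs atTop (𝓝 μ)) {F : Set W} (hF : IsClosed F) {c : ℝ≥0∞}
    (hc : (μ : Measure W) F < c) : ∀ᶠ n in atTop, (μs n : Measure W) F < c := by
  have := ProbabilityMeasure.limsup_measure_closed_le_of_tendsto h hF
  exact Filter.eventually_lt_of_limsup_lt (lt_of_le_of_lt this hc)

end aux

section aux2
variable {W : Type*} [NormedAddCommGroup W] [NormedSpace ℝ W]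
  [MeasurableSpace W] [BorelSpace W] [FiniteDimensional ℝ W]

lemma aux_mapconv {μs : ℕ → ProbabilityMeasure W} {μ : ProbabilityMeasure W}
    (hμ : Tendsto μs atTop (𝓝 μ)) {T : ℕ → W →L[ℝ] W} {B : W →L[ℝ] W}
    (hT : Tendsto T atTop (𝓝 B)) (φ : BoundedContinuousFunction W ℝ) :
    Tendsto (fun n => ∫ x, φ (T n x) ∂(μs n : Measure W)) atTop
      (𝓝 (∫ x, φ (B x) ∂(μ : Measure W))) := by
  have hTn : Tendsto (fun n => ‖T n - B‖) atTop (𝓝 0) := by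
    have := tendsto_iff_norm_sub_tendsto_zero.mp hT
    simpa using this
  have h2 : Tendsto (fun n => ∫ x, φ (B x) ∂(μs n : Measure W)) atTop
      (𝓝 (∫ x, φ (B x) ∂(μ : Measure W))) := by
    have := (ProbabilityMeasure.tendsto_iff_forall_integral_tendsto.mp hμ)
      (φ.compContinuous ⟨fun x => B x, B.continuous⟩)
    simpa [BoundedContinuousFunction.compContinuous_apply] using this
  have h1 : Tendsto (fun n => ∫ x, φ (T n x) ∂(μs n : Measure W)
      - ∫ x, φ (B x) ∂(μs n : Measure W)) atTop (𝓝 0) := by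
    rw [NormedAddCommGroup.tendsto_nhds_zero]
    intro ε hε
    set Cφ : ℝ := ‖φ‖ with hCφ
    have hCφ0 : 0 ≤ Cφ := norm_nonneg _
    set ε2 : ℝ := ε / (4 * (Cφ + 1)) with hε2
    have hε2pos : 0 < ε2 := by positivity
    have hδ2pos : (0:ℝ≥0∞) < ENNReal.ofReal ε2 := by
      simpa using ENNReal.ofReal_pos.mpr hε2pos
    obtain ⟨M, hM0, hMμ⟩ := aux_tail μ hδ2pos
    have hFclosed : IsClosed {x : W | M ≤ ‖x‖} :=
      isClosed_le continuous_const continuous_norm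
    have hev1 : ∀ᶠ n in atTop,
        (μs n : Measure W) {x : W | M ≤ ‖x‖} < ENNReal.ofReal ε2 :=
      aux_ev hμ hFclosed hMμ
    -- uniform continuity on a compact ball
    set R : ℝ := (‖B‖ + 1) * M + M with hR
    have hK : IsCompact (Metric.closedBall (0:W) R) := isCompact_closedBall _ _
    have hUC : UniformContinuousOn φ (Metric.closedBall (0:W) R) :=
      hK.uniformContinuousOn_of_continuous φ.continuous.continuousOn
    obtain ⟨δ, hδpos, hδ⟩ := Metric.uniformContinuousOn_iff.mp hUC (ε/4) (by positivity)
    have hev2 : ∀ᶠ n in atTop, ‖T n - B‖ < min 1 (δ / (M + 1)) := by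
      refine hTn.eventually_lt_const ?_
      exact lt_min one_pos (by positivity)
    filter_upwards [hev1, hev2] with n hn1 hn2
    have hTB1 : ‖T n - B‖ ≤ 1 := (lt_min_iff.mp hn2).1.le
    have hTBδ : ‖T n - B‖ < δ / (M + 1) := (lt_min_iff.mp hn2).2
    -- integrability
    have iTn : Integrable (fun x => φ (T n x)) (μs n : Measure W) := by
      have := (φ.compContinuous ⟨fun x => (T n) x, (T n).continuous⟩).integrable
        (μ := (μs n : Measure W))
      simpa [BoundedContinuousFunction.compContinuous_apply, Function.comp_def] using this
    have iB : Integrable (fun x => φ (B x)) (μs n : Measure W) := by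
      have := (φ.compContinuous ⟨fun x => B x, B.continuous⟩).integrable
        (μ := (μs n : Measure W))
      simpa [BoundedContinuousFunction.compContinuous_apply, Function.comp_def] using this
    have hmeasS : MeasurableSet {x : W | M ≤ ‖x‖} := hFclosed.measurableSet
    -- pointwise bound
    have hpt : ∀ x : W, ‖φ (T n x) - φ (B x)‖ ≤
        ε/4 + Set.indicator {x : W | M ≤ ‖x‖} (fun _ => 2 * Cφ) x := by
      intro x
      by_cases hx : M ≤ ‖x‖
      · have : ‖φ (T n x) - φ (B x)‖ ≤ 2 * Cφ := by
          calc ‖φ (T n x) - φ (B x)‖ ≤ ‖φ (T n x)‖ + ‖φ (B x)‖ := norm_sub_le _ _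
          _ ≤ Cφ + Cφ := add_le_add (φ.norm_coe_le_norm _) (φ.norm_coe_le_norm _)
          _ = 2 * Cφ := by ring
        rw [Set.indicator_of_mem (show x ∈ {x : W | M ≤ ‖x‖} from hx)
          (fun _ => 2 * Cφ)]
        linarith
      · push_neg at hx
        rw [Set.indicator_of_notMem
          (show x ∉ {x : W | M ≤ ‖x‖} from fun h => hx.not_ge h) (fun _ => 2 * Cφ)]
        have hxM : ‖x‖ ≤ M := hx.le
        have hTx : T n x ∈ Metric.closedBall (0:W) R := by
          rw [Metric.mem_closedBall, dist_zero_right]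
          calc ‖T n x‖ = ‖(T n - B) x + B x‖ := by simp
          _ ≤ ‖(T n - B) x‖ + ‖B x‖ := norm_add_le _ _
          _ ≤ ‖T n - B‖ * ‖x‖ + ‖B‖ * ‖x‖ :=
              add_le_add ((T n - B).le_opNorm x) (B.le_opNorm x)
          _ ≤ 1 * M + ‖B‖ * M := by
              refine add_le_add ?_ ?_
              · exact mul_le_mul hTB1 hxM (norm_nonneg _) zero_le_one
              · exact mul_le_mul_of_nonneg_left hxM (norm_nonneg _)
          _ ≤ R := by rw [hR]; nlinarith [norm_nonneg B]
        have hBx : B x ∈ Metric.closedBall (0:W) R := by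
          rw [Metric.mem_closedBall, dist_zero_right]
          calc ‖B x‖ ≤ ‖B‖ * ‖x‖ := B.le_opNorm x
          _ ≤ ‖B‖ * M := mul_le_mul_of_nonneg_left hxM (norm_nonneg _)
          _ ≤ R := by rw [hR]; nlinarith [norm_nonneg B, hM0]
        have hdist : dist (T n x) (B x) < δ := by
          rw [dist_eq_norm]
          calc ‖T n x - B x‖ = ‖(T n - B) x‖ := by simp
          _ ≤ ‖T n - B‖ * ‖x‖ := (T n - B).le_opNorm x
          _ ≤ ‖T n - B‖ * (M + 1) := by
              refine mul_le_mul_of_nonneg_left (by linarith) (norm_nonneg _)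
          _ < (δ / (M + 1)) * (M + 1) := by
              refine mul_lt_mul_of_pos_right hTBδ (by linarith)
          _ = δ := by field_simp
        have := hδ _ hTx _ hBx hdist
        rw [Real.dist_eq] at this
        have : ‖φ (T n x) - φ (B x)‖ ≤ ε/4 := by
          rw [Real.norm_eq_abs]; exact this.le
        linarith
    -- integrate the bound
    have iRHS : Integrable (fun x : W => ε/4 +
        Set.indicator {x : W | M ≤ ‖x‖} (fun _ => 2 * Cφ) x) (μs n : Measure W) := by
      exact (integrable_const _).add ((integrable_const (2*Cφ)).indicator hmeasS)
    calc ‖∫ x, φ (T n x) ∂(μs n : Measure W) - ∫ x, φ (B x) ∂(μs n : Measure W)‖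
        = ‖∫ x, (φ (T n x) - φ (B x)) ∂(μs n : Measure W)‖ := by
          rw [integral_sub iTn iB]
      _ ≤ ∫ x, ‖φ (T n x) - φ (B x)‖ ∂(μs n : Measure W) := norm_integral_le_integral_norm _
      _ ≤ ∫ x, (ε/4 + Set.indicator {x : W | M ≤ ‖x‖} (fun _ => 2 * Cφ) x)
            ∂(μs n : Measure W) := integral_mono (iTn.sub iB).norm iRHS hpt
      _ = ε/4 + (2*Cφ) * ((μs n : Measure W) {x : W | M ≤ ‖x‖}).toReal := by
          rw [integral_add (integrable_const _)
            ((integrable_const (2*Cφ)).indicator hmeasS)]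
          rw [integral_indicator_const _ hmeasS, integral_const]
          simp [mul_comm]
          exact Or.inl rfl
      _ ≤ ε/4 + (2*Cφ) * ε2 := by
          have hle : ((μs n : Measure W) {x : W | M ≤ ‖x‖}).toReal ≤ ε2 := by
            have := ENNReal.toReal_mono (by simp) hn1.le
            simpa [ENNReal.toReal_ofReal hε2pos.le] using this
          nlinarith
      _ < ε := by
          rw [hε2]
          rw [div_eq_iff (by positivity : (4:ℝ) * (Cφ+1) ≠ 0)] at *
          nlinarith
  have := h1.add h2
  simpa using this

lemma aux_bdd {μs ρs : ℕ → ProbabilityMeasure W} {μ ν : ProbabilityMeasure W}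
    {T : ℕ → W →L[ℝ] W}
    (hμ : Tendsto μs atTop (𝓝 μ)) (hρ : Tendsto ρs atTop (𝓝 ν))
    (hpush : ∀ n, (ρs n : Measure W) = Measure.map (T n) (μs n : Measure W))
    (hfull : ∀ h : W →L[ℝ] ℝ, h ≠ 0 → (μ : Measure W) {x | h x = 0} < 1) :
    ∃ C : ℝ, ∀ n, ‖T n‖ ≤ C := by
  by_contra hCc
  push_neg at hCc
  -- extract indices with exploding norms
  have hex : ∀ k : ℕ, ∃ n : ℕ, ((k : ℝ) + 1) ⊔
      ((Finset.range (k+1)).sup' Finset.nonempty_range_add_one (fun j => ‖T j‖)) < ‖T n‖ :=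
    fun k => hCc _
  choose g hg using hex
  have hgk : ∀ k : ℕ, (k : ℝ) + 1 < ‖T (g k)‖ := fun k => lt_of_le_of_lt le_sup_left (hg k)
  have hggt : ∀ k : ℕ, k < g k := by
    intro k
    by_contra hle
    push_neg at hle
    have hmem : g k ∈ Finset.range (k+1) := Finset.mem_range.mpr (Nat.lt_succ_of_le hle)
    have : ‖T (g k)‖ ≤ (Finset.range (k+1)).sup' Finset.nonempty_range_add_one
        (fun j => ‖T j‖) := Finset.le_sup' (f := fun j => ‖T j‖) hmem
    have h2 := lt_of_le_of_lt le_sup_right (hg k)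
    exact absurd this (not_le.mpr h2)
  have hgtop : Tendsto g atTop atTop :=
    tendsto_atTop_mono (fun k => (hggt k).le) tendsto_id
  -- normalized operators in the unit sphere
  have hcpos : ∀ k : ℕ, (0:ℝ) < ‖T (g k)‖ := fun k => lt_of_le_of_lt (by positivity) (hgk k)
  set U : ℕ → (W →L[ℝ] W) := fun k => (‖T (g k)‖)⁻¹ • T (g k) with hU
  have hUnorm : ∀ k, U k ∈ Metric.sphere (0 : W →L[ℝ] W) 1 := by
    intro k
    simp only [Metric.mem_sphere, dist_zero_right, hU]
    rw [norm_smul (‖T (g k)‖⁻¹) (T (g k)), norm_inv, norm_norm,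
      inv_mul_cancel₀ (hcpos k).ne']
  have hKsph : IsCompact (Metric.sphere (0 : W →L[ℝ] W) 1) := isCompact_sphere _ _
  obtain ⟨Uoo, hUoomem, ψ, hψmono, hψconv⟩ := hKsph.tendsto_subseq hUnorm
  have hUoonorm : ‖Uoo‖ = 1 := by simpa [dist_zero_right] using hUoomem
  have hUoone : Uoo ≠ 0 := by
    intro h0
    rw [h0] at hUoonorm
    simp at hUoonorm
  obtain ⟨v, hv⟩ : ∃ v : W, Uoo v ≠ 0 := by
    by_contra hvv
    push_neg at hvv
    exact hUoone (ContinuousLinearMap.ext fun x => by simp [hvv x])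
  obtain ⟨g₀, hg₀⟩ := SeparatingDual.exists_ne_zero (R := ℝ) hv
  set h : W →L[ℝ] ℝ := g₀.comp Uoo with hh
  have hhne : h ≠ 0 := by
    intro h0
    have : h v = 0 := by rw [h0]; rfl
    exact hg₀ (by simpa [hh] using this)
  have ha : (μ : Measure W) {x | h x = 0} < 1 := hfull h hhne
  obtain ⟨β, hβ1, hβ2⟩ := exists_between ha
  obtain ⟨γ, hγ1, hγ2⟩ := exists_between hβ2
  have hεpos : (0:ℝ≥0∞) < γ - β := tsub_pos_of_lt hγ1
  -- choose δ
  have hDclosed : ∀ j : ℕ, IsClosed {x : W | ‖Uoo x‖ ≤ 1/((j:ℝ)+1)} := fun j =>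
    isClosed_le (continuous_norm.comp Uoo.continuous) continuous_const
  have hDanti : Antitone (fun j : ℕ => {x : W | ‖Uoo x‖ ≤ 1/((j:ℝ)+1)}) := by
    intro a b hab x hx
    have hx' : ‖Uoo x‖ ≤ 1/((b:ℝ)+1) := hx
    show ‖Uoo x‖ ≤ 1/((a:ℝ)+1)
    have : (1:ℝ)/((b:ℝ)+1) ≤ 1/((a:ℝ)+1) := by
      apply one_div_le_one_div_of_le (by positivity)
      exact_mod_cast Nat.succ_le_succ hab
    linarith
  have hDlim := tendsto_measure_iInter_atTop (μ := (μ : Measure W))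
    (fun j => ((hDclosed j).measurableSet).nullMeasurableSet) hDanti ⟨0, measure_ne_top _ _⟩
  have hDsub : (⋂ j : ℕ, {x : W | ‖Uoo x‖ ≤ 1/((j:ℝ)+1)}) ⊆ {x : W | h x = 0} := by
    intro x hx
    simp only [Set.mem_iInter, Set.mem_setOf_eq] at hx
    have hU0 : Uoo x = 0 := by
      by_contra hne
      have hpos : 0 < ‖Uoo x‖ := norm_pos_iff.mpr hne
      obtain ⟨j, hj⟩ := exists_nat_one_div_lt hpos
      exact absurd (hx j) (not_le.mpr hj)
    show g₀ (Uoo x) = 0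
    rw [hU0]; simp
  have hDlt : ∀ᶠ j : ℕ in atTop,
      (μ : Measure W) {x : W | ‖Uoo x‖ ≤ 1/((j:ℝ)+1)} < β := by
    refine hDlim.eventually_lt_const ?_
    exact lt_of_le_of_lt (measure_mono hDsub) hβ1
  obtain ⟨j0, hj0⟩ := hDlt.exists
  set δ : ℝ := 1/((j0:ℝ)+1) with hδdef
  have hδpos : 0 < δ := by positivity
  set D : Set W := {x : W | ‖Uoo x‖ ≤ δ} with hD
  -- choose M
  obtain ⟨M, hM0, hMμ⟩ := aux_tail μ hεpos
  set A : Set W := {x : W | M ≤ ‖x‖} with hA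
  have hAclosed : IsClosed A := isClosed_le continuous_const continuous_norm
  -- subsequence measures
  have hidx : Tendsto (fun k => g (ψ k)) atTop atTop :=
    hgtop.comp hψmono.tendsto_atTop
  have hμ' : Tendsto (fun k => μs (g (ψ k))) atTop (𝓝 μ) := hμ.comp hidx
  have hρ' : Tendsto (fun k => ρs (g (ψ k))) atTop (𝓝 ν) := hρ.comp hidx
  have hevA : ∀ᶠ k in atTop, (μs (g (ψ k)) : Measure W) A < γ - β :=
    aux_ev hμ' hAclosed hMμ
  have hevD : ∀ᶠ k in atTop, (μs (g (ψ k)) : Measure W) D < β :=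
    aux_ev hμ' (hDclosed j0) hj0
  have hUconv : Tendsto (fun k => ‖U (ψ k) - Uoo‖) atTop (𝓝 0) := by
    have := tendsto_iff_norm_sub_tendsto_zero.mp hψconv
    simpa using this
  have hevU : ∀ᶠ k in atTop, ‖U (ψ k) - Uoo‖ < δ/(2*M) :=
    hUconv.eventually_lt_const (by positivity)
  -- the contradiction: ν(univ) ≤ γ < 1
  have hballmono : Monotone (fun R : ℕ => Metric.ball (0:W) R) := by
    intro a b hab
    exact Metric.ball_subset_ball (by exact_mod_cast hab)
  have hballunion : (⋃ R : ℕ, Metric.ball (0:W) R) = Set.univ := by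
    ext x
    simp only [Set.mem_iUnion, Metric.mem_ball, dist_zero_right, Set.mem_univ, iff_true]
    obtain ⟨R, hR⟩ := exists_nat_gt ‖x‖
    exact ⟨R, hR⟩
  have hνlim := tendsto_measure_iUnion_atTop (μ := (ν : Measure W)) hballmono
  rw [hballunion] at hνlim
  have hνuniv : (ν : Measure W) Set.univ = 1 := measure_univ
  have hνball : ∀ R : ℕ, (ν : Measure W) (Metric.ball (0:W) R) ≤ γ := by
    intro R
    have hliminf := ProbabilityMeasure.le_liminf_measure_open_of_tendsto hρ'
      (Metric.isOpen_ball (x := (0:W)) (ε := (R:ℝ)))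
    refine le_trans hliminf ?_
    -- eventually ρ' k (ball) ≤ γ
    have hev4 : ∀ᶠ k : ℕ in atTop, (R:ℝ) ≤ ((k:ℝ)+1) * (δ/2) := by
      have htop : Tendsto (fun k : ℕ => ((k:ℝ)+1) * (δ/2)) atTop atTop := by
        apply Tendsto.atTop_mul_const (by positivity)
        exact tendsto_atTop_add_const_right _ _ tendsto_natCast_atTop_atTop
      exact htop.eventually_ge_atTop _
    have hev : ∀ᶠ k in atTop, (ρs (g (ψ k)) : Measure W) (Metric.ball (0:W) R) ≤ γ := by
      filter_upwards [hevA, hevD, hevU, hev4] with k hkA hkD hkU hk4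
      rw [hpush]
      rw [Measure.map_apply (T (g (ψ k))).continuous.measurable Metric.isOpen_ball.measurableSet]
      have hsub : (T (g (ψ k)))⁻¹' (Metric.ball (0:W) R) ⊆ A ∪ D := by
        intro x hx
        by_contra hnot
        rw [Set.mem_union] at hnot
        push_neg at hnot
        obtain ⟨hxA, hxD⟩ := hnot
        have hxM : ‖x‖ < M := by
          by_contra hge
          exact hxA (by simpa [hA] using not_lt.mp hge)
        have hxδ : δ < ‖Uoo x‖ := by
          by_contra hle
          exact hxD (by simpa [hD] using not_lt.mp hle)
        have hTx : ‖T (g (ψ k)) x‖ < R := by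
          simpa [dist_zero_right] using hx
        -- lower bound for ‖T x‖
        have hTeq : T (g (ψ k)) = ‖T (g (ψ k))‖ • U (ψ k) := by
          rw [hU]
          rw [smul_inv_smul₀ (hcpos (ψ k)).ne']
        have hUx : δ/2 ≤ ‖U (ψ k) x‖ := by
          have h1 : ‖Uoo x‖ - ‖U (ψ k) x‖ ≤ ‖(U (ψ k) - Uoo) x‖ := by
            calc ‖Uoo x‖ - ‖U (ψ k) x‖ ≤ ‖Uoo x - U (ψ k) x‖ := norm_sub_norm_le _ _
            _ = ‖(U (ψ k) - Uoo) x‖ := by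
                rw [← norm_neg]
                congr 1
                simp
          have h2 : ‖(U (ψ k) - Uoo) x‖ ≤ δ/2 := by
            calc ‖(U (ψ k) - Uoo) x‖ ≤ ‖U (ψ k) - Uoo‖ * ‖x‖ := (U (ψ k) - Uoo).le_opNorm x
            _ ≤ (δ/(2*M)) * M := by
                apply mul_le_mul hkU.le hxM.le (norm_nonneg _) (by positivity)
            _ = δ/2 := by field_simp
          linarith
        have hclow : ((ψ k : ℝ)+1) ≤ ‖T (g (ψ k))‖ := (hgk (ψ k)).le
        have hkψ : (k:ℝ) ≤ (ψ k : ℝ) := by exact_mod_cast hψmono.le_apply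
        have : (R:ℝ) ≤ ‖T (g (ψ k)) x‖ := by
          calc (R:ℝ) ≤ ((k:ℝ)+1) * (δ/2) := hk4
          _ ≤ ((ψ k:ℝ)+1) * (δ/2) := by
              apply mul_le_mul_of_nonneg_right (by linarith) (by positivity)
          _ ≤ ‖T (g (ψ k))‖ * ‖U (ψ k) x‖ := by
              apply mul_le_mul hclow hUx (by positivity)
              positivity
          _ = ‖T (g (ψ k)) x‖ := by
              conv_rhs => rw [hTeq]
              simp [norm_smul, abs_of_nonneg (hcpos (ψ k)).le]
        exact absurd hTx (not_lt.mpr this)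
      calc (μs (g (ψ k)) : Measure W) ((T (g (ψ k)))⁻¹' (Metric.ball (0:W) R))
          ≤ (μs (g (ψ k)) : Measure W) (A ∪ D) := measure_mono hsub
        _ ≤ (μs (g (ψ k)) : Measure W) A + (μs (g (ψ k)) : Measure W) D := measure_union_le _ _
        _ ≤ (γ - β) + β := add_le_add hkA.le hkD.le
        _ = γ := tsub_add_cancel_of_le hγ1.le
    exact liminf_le_of_frequently_le' hev.frequently
  have : (1:ℝ≥0∞) ≤ γ := by
    rw [← hνuniv]
    exact le_of_tendsto' hνlim hνball
  exact absurd hγ2 (not_lt.mpr this)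

end aux2

lemma aux_exp_mul {d : ℕ} (E : Matrix (Fin d) (Fin d) ℝ) {a b : ℝ} (ha : 0 < a) (hb : 0 < b) :
    NormedSpace.exp (Real.log (a * b) • E)
      = NormedSpace.exp (Real.log a • E) * NormedSpace.exp (Real.log b • E) := by
  rw [Real.log_mul ha.ne' hb.ne', add_smul]
  exact Matrix.exp_add_of_commute (Real.log a • E) (Real.log b • E)
    (((Commute.refl E).smul_left (Real.log a)).smul_right (Real.log b))

/-- The law (distribution) of a measurable map as a probability measure. -/
noncomputable def law {Ω α : Type*} [MeasurableSpace Ω] [MeasurableSpace α]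
    (P : Measure Ω) [IsProbabilityMeasure P] (g : Ω → α) (hg : Measurable g) :
    ProbabilityMeasure α :=
  ⟨Measure.map g P, Measure.isProbabilityMeasure_map hg.aemeasurable⟩

lemma law_coe {Ω α : Type*} [MeasurableSpace Ω] [MeasurableSpace α]
    (P : Measure Ω) [IsProbabilityMeasure P] (g : Ω → α) (hg : Measurable g) :
    (law P g hg : Measure α) = Measure.map g P := rfl

lemma law_integral {Ω α : Type*} [MeasurableSpace Ω] [TopologicalSpace α]
    [MeasurableSpace α] [OpensMeasurableSpace α]
    (P : Measure Ω) [IsProbabilityMeasure P] (g : Ω → α) (hg : Measurable g)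
    (φ : BoundedContinuousFunction α ℝ) :
    ∫ x, φ x ∂(law P g hg : Measure α) = ∫ ω, φ (g ω) ∂P := by
  rw [law_coe, integral_map hg.aemeasurable φ.continuous.aestronglyMeasurable]

/-- Componentwise action of a continuous linear map on tuples, as a linear map. -/
noncomputable def pimap {m : ℕ} (k : ℕ) :
    ((Fin m → ℝ) →L[ℝ] (Fin m → ℝ)) →ₗ[ℝ]
      ((Fin k → Fin m → ℝ) →L[ℝ] (Fin k → Fin m → ℝ)) where
  toFun S := ContinuousLinearMap.pi (fun i => S.comp (ContinuousLinearMap.proj i))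
  map_add' S₁ S₂ := by
    ext x i
    simp
  map_smul' c S := by
    ext x i
    simp

lemma pimap_apply {m k : ℕ} (S : (Fin m → ℝ) →L[ℝ] (Fin m → ℝ))
    (z : Fin k → Fin m → ℝ) (i : Fin k) : pimap k S z i = S (z i) := rfl

/-- Let `X` be a proper, continuous-in-probability `ℝ^m`-valued
random field on `ℝ^d`. Suppose there exist a real `d×d` matrix `E` all of whose
complex eigenvalues have positive real part, and `f : (0,∞) → GL(ℝ^m)`, such that
the finite-dimensional distributions of `f(r)Y(r^E t)` converge weakly to those of
`X` as `r → ∞`, where `r^E = exp((ln r)·E)` and `Y` is an `ℝ^m`-valued random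
field on `ℝ^d`. Then `X` is operator self-similar with time-scaling exponent `E`:
for every `r > 0` there is a linear operator `B(r)` on `ℝ^m` with
`{X(r^E t)} =_{f.d.d.} {B(r)X(t)}`. -/
theorem stmt_16 {d m : ℕ} {Ω Ω' : Type*} [MeasurableSpace Ω] [MeasurableSpace Ω']
    (P : Measure Ω) [IsProbabilityMeasure P]
    (P' : Measure Ω') [IsProbabilityMeasure P']
    (X : (Fin d → ℝ) → Ω → (Fin m → ℝ))
    (Y : (Fin d → ℝ) → Ω' → (Fin m → ℝ))
    (hXmeas : ∀ t, Measurable (X t))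
    (hYmeas : ∀ t, Measurable (Y t))
    -- `X` is continuous in probability
    (hXcont : ∀ t : Fin d → ℝ, ∀ u : ℕ → Fin d → ℝ, Tendsto u atTop (𝓝 t) →
      TendstoInMeasure P (fun n => X (u n)) atTop (X t))
    -- `X` is proper: for `t ≠ 0` the law of `X(t)` is not carried by a proper
    -- affine hyperplane of `ℝ^m`
    (hXproper : ∀ t : Fin d → ℝ, t ≠ 0 →
      ¬ ∃ (w : Fin m → ℝ) (c : ℝ), w ≠ 0 ∧ ∀ᵐ ω ∂P, ∑ j, w j * X t ω j = c)
    (E : Matrix (Fin d) (Fin d) ℝ)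
    -- every complex eigenvalue of `E` has positive real part
    (hE : ∀ z ∈ spectrum ℂ (E.map (Complex.ofReal)), 0 < z.re)
    (f : ℝ → ((Fin m → ℝ) ≃ₗ[ℝ] (Fin m → ℝ)))
    -- convergence of finite-dimensional distributions as `r → ∞`
    (hconv : ∀ (k : ℕ) (t : Fin k → Fin d → ℝ),
      ∀ φ : BoundedContinuousFunction (Fin k → Fin m → ℝ) ℝ,
        Tendsto (fun r : ℝ =>
            ∫ ω, φ (fun i =>
              f r (Y ((NormedSpace.exp (Real.log r • E)).mulVec (t i)) ω)) ∂P')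
          atTop (𝓝 (∫ ω, φ (fun i => X (t i) ω) ∂P))) :
    ∀ r : ℝ, 0 < r → ∃ B : (Fin m → ℝ) →ₗ[ℝ] (Fin m → ℝ),
      ∀ (k : ℕ) (t : Fin k → Fin d → ℝ),
        Measure.map
            (fun ω => fun i => X ((NormedSpace.exp (Real.log r • E)).mulVec (t i)) ω) P
          = Measure.map (fun ω => fun i => B (X (t i) ω)) P := by
  intro r hr
  by_cases hd : d = 0
  · -- degenerate case: all time points are `0`
    subst hd
    refine ⟨LinearMap.id, ?_⟩
    intro k t
    have ht : ∀ i, (NormedSpace.exp (Real.log r • E)).mulVec (t i) = t i := by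
      intro i
      funext j
      exact j.elim0
    simp only [ht, LinearMap.id_coe, id_eq]
  · -- main case
    have hdpos : 0 < d := Nat.pos_of_ne_zero hd
    have hfcont : ∀ s : ℝ, Continuous (f s) :=
      fun s => LinearMap.continuous_of_finiteDimensional (f s).toLinearMap
    have hXt : ∀ (k : ℕ) (t : Fin k → Fin d → ℝ),
        Measurable (fun ω (i : Fin k) => X (t i) ω) := fun k t =>
      measurable_pi_lambda _ fun i => hXmeas (t i)
    have hYg : ∀ (s : ℝ) (k : ℕ) (u : Fin k → Fin d → ℝ),
        Measurable (fun ω (i : Fin k) => f s (Y (u i) ω)) := fun s k u =>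
      measurable_pi_lambda _ fun i => (hfcont s).measurable.comp (hYmeas (u i))
    -- the base rescaling operators
    set Tb : ℕ → ((Fin m → ℝ) →L[ℝ] (Fin m → ℝ)) := fun n =>
      LinearMap.toContinuousLinearMap
        (((f ((n:ℝ)/r)).toLinearMap).comp ((f (n:ℝ)).symm.toLinearMap)) with hTbdef
    have hTbapp : ∀ (n : ℕ) (z : Fin m → ℝ), Tb n (f (n:ℝ) z) = f ((n:ℝ)/r) z := by
      intro n z
      show (LinearMap.toContinuousLinearMap
        (((f ((n:ℝ)/r)).toLinearMap).comp ((f (n:ℝ)).symm.toLinearMap))) (f (n:ℝ) z)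
          = f ((n:ℝ)/r) z
      rw [LinearMap.coe_toContinuousLinearMap']
      simp
    -- convergence of the rescaled laws to the law of X
    have hμconv : ∀ (k : ℕ) (t : Fin k → Fin d → ℝ),
        Tendsto (fun n : ℕ => law P'
            (fun ω i => f (n:ℝ)
              (Y ((NormedSpace.exp (Real.log (n:ℝ) • E)).mulVec (t i)) ω))
            (hYg (n:ℝ) k (fun i => (NormedSpace.exp (Real.log (n:ℝ) • E)).mulVec (t i))))
          atTop (𝓝 (law P (fun ω i => X (t i) ω) (hXt k t))) := by
      intro k t
      rw [ProbabilityMeasure.tendsto_iff_forall_integral_tendsto]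
      intro φ
      have h0 := (hconv k t φ).comp (tendsto_natCast_atTop_atTop (R := ℝ))
      rw [law_integral]
      refine Tendsto.congr (fun n => ?_) h0
      exact (law_integral P' _ _ φ).symm
    -- convergence of the doubly-rescaled laws to the law of X ∘ r^E
    have hρconv : ∀ (k : ℕ) (t : Fin k → Fin d → ℝ),
        Tendsto (fun n : ℕ => law P'
            (fun ω i => f ((n:ℝ)/r)
              (Y ((NormedSpace.exp (Real.log (n:ℝ) • E)).mulVec (t i)) ω))
            (hYg ((n:ℝ)/r) k (fun i => (NormedSpace.exp (Real.log (n:ℝ) • E)).mulVec (t i))))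
          atTop (𝓝 (law P
            (fun ω i => X ((NormedSpace.exp (Real.log r • E)).mulVec (t i)) ω)
            (hXt k (fun i => (NormedSpace.exp (Real.log r • E)).mulVec (t i))))) := by
      intro k t
      rw [ProbabilityMeasure.tendsto_iff_forall_integral_tendsto]
      intro φ
      have hdiv : Tendsto (fun n : ℕ => (n:ℝ)/r) atTop atTop :=
        (tendsto_natCast_atTop_atTop (R := ℝ)).atTop_div_const hr
      have h0 := (hconv k
        (fun i => (NormedSpace.exp (Real.log r • E)).mulVec (t i)) φ).comp hdiv
      rw [law_integral]
      refine Tendsto.congr' ?_ h0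
      filter_upwards [eventually_ge_atTop 1] with n hn
      have hnpos : (0:ℝ) < (n:ℝ) := by exact_mod_cast hn
      have hnr : (0:ℝ) < (n:ℝ)/r := by positivity
      have hmv : ∀ v : Fin d → ℝ,
          (NormedSpace.exp (Real.log ((n:ℝ)/r) • E)).mulVec
            ((NormedSpace.exp (Real.log r • E)).mulVec v)
          = (NormedSpace.exp (Real.log (n:ℝ) • E)).mulVec v := by
        intro v
        rw [Matrix.mulVec_mulVec, ← aux_exp_mul E hnr hr]
        congr 2
        field_simp
      rw [law_integral]
      show (∫ ω, φ (fun i => f ((n:ℝ)/r)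
          (Y ((NormedSpace.exp (Real.log ((n:ℝ)/r) • E)).mulVec
            ((NormedSpace.exp (Real.log r • E)).mulVec (t i))) ω)) ∂P') = _
      congr 1
      funext ω
      congr 1
      funext i
      rw [hmv]
    -- pushforward identity
    have hpush : ∀ (k : ℕ) (t : Fin k → Fin d → ℝ) (n : ℕ),
        ((law P' (fun ω i => f ((n:ℝ)/r)
            (Y ((NormedSpace.exp (Real.log (n:ℝ) • E)).mulVec (t i)) ω))
            (hYg ((n:ℝ)/r) k (fun i =>
              (NormedSpace.exp (Real.log (n:ℝ) • E)).mulVec (t i)))) : Measure _)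
          = Measure.map (pimap k (Tb n))
            ((law P' (fun ω i => f (n:ℝ)
              (Y ((NormedSpace.exp (Real.log (n:ℝ) • E)).mulVec (t i)) ω))
              (hYg (n:ℝ) k (fun i =>
                (NormedSpace.exp (Real.log (n:ℝ) • E)).mulVec (t i)))) : Measure _) := by
      intro k t n
      rw [law_coe, law_coe,
        Measure.map_map (pimap k (Tb n)).continuous.measurable (hYg _ _ _)]
      congr 1
      funext ω
      simp only [Function.comp_apply]
      funext i
      rw [pimap_apply]
      exact (hTbapp n _).symm
    -- properness at a nonzero time point
    have ht0 : (fun _ : Fin d => (1:ℝ)) ≠ 0 := by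
      intro h0
      have := congrFun h0 ⟨0, hdpos⟩
      simpa using this
    have hfull : ∀ h : (Fin 1 → Fin m → ℝ) →L[ℝ] ℝ, h ≠ 0 →
        ((law P (fun ω (i : Fin 1) => X ((fun _ => fun _ : Fin d => (1:ℝ)) i) ω)
          (hXt 1 (fun _ => fun _ : Fin d => (1:ℝ)))) : Measure _) {x | h x = 0} < 1 := by
      intro h hne
      by_contra hge
      push_neg at hge
      have hSmeas : MeasurableSet {x : Fin 1 → Fin m → ℝ | h x = 0} :=
        h.continuous.measurable (measurableSet_singleton 0)
      have heq1 : ((law P (fun ω (i : Fin 1) => X ((fun _ => fun _ : Fin d => (1:ℝ)) i) ω)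
          (hXt 1 (fun _ => fun _ : Fin d => (1:ℝ)))) : Measure _) {x | h x = 0} = 1 :=
        le_antisymm prob_le_one hge
      rw [law_coe, Measure.map_apply (hXt 1 _) hSmeas] at heq1
      have hae : ∀ᵐ ω ∂P, h (fun _ : Fin 1 => X (fun _ : Fin d => (1:ℝ)) ω) = 0 := by
        rw [ae_iff]
        have hpre : MeasurableSet ((fun ω (i : Fin 1) =>
            X ((fun _ => fun _ : Fin d => (1:ℝ)) i) ω) ⁻¹' {x | h x = 0}) :=
          (hXt 1 _) hSmeas
        have := (prob_compl_eq_zero_iff hpre).mpr heq1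
        convert this using 1
        rfl
      -- linear functional representation
      set g1 : (Fin m → ℝ) →ₗ[ℝ] ℝ :=
        h.toLinearMap.comp (LinearMap.pi fun _ : Fin 1 => LinearMap.id) with hg1def
      have hg1app : ∀ x : Fin m → ℝ, g1 x = h (fun _ : Fin 1 => x) := fun x => rfl
      set w : Fin m → ℝ := fun j => g1 (fun j' => if j = j' then 1 else 0) with hwdef
      have hrep : ∀ x : Fin m → ℝ, g1 x = ∑ j, w j * x j := by
        intro x
        rw [LinearMap.pi_apply_eq_sum_univ g1 x]
        refine Finset.sum_congr rfl (fun j _ => ?_)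
        rw [hwdef, smul_eq_mul, mul_comm]
      have hwne : w ≠ 0 := by
        intro hw0
        apply hne
        ext z
        have hz : z = fun _ : Fin 1 => z 0 := by
          funext i
          rw [Fin.eq_zero i]
        have h1 : h z = g1 (z 0) := by
          rw [hg1app, ← hz]
        rw [h1, hrep, hw0]
        simp
      refine hXproper (fun _ : Fin d => (1:ℝ)) ht0 ⟨w, 0, hwne, ?_⟩
      filter_upwards [hae] with ω hω
      have : g1 (X (fun _ : Fin d => (1:ℝ)) ω) = 0 := by
        rw [hg1app]
        exact hω
      rw [hrep] at this
      exact this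
    -- boundedness of the rescaling operators
    obtain ⟨C, hC⟩ := aux_bdd (T := fun n => pimap 1 (Tb n))
      (hμconv 1 (fun _ => fun _ : Fin d => (1:ℝ)))
      (hρconv 1 (fun _ => fun _ : Fin d => (1:ℝ)))
      (hpush 1 (fun _ => fun _ : Fin d => (1:ℝ))) hfull
    have hTbC : ∀ n, ‖Tb n‖ ≤ max C 0 := by
      intro n
      refine ContinuousLinearMap.opNorm_le_bound _ (le_max_right _ _) ?_
      intro x
      have h2 : ‖(pimap 1 (Tb n)) (fun _ : Fin 1 => x)‖ = ‖Tb n x‖ := by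
        have hfn : (pimap 1 (Tb n)) (fun _ : Fin 1 => x) = fun _ : Fin 1 => Tb n x := by
          funext i
          exact pimap_apply _ _ _
        rw [hfn]
        exact pi_norm_const _
      have h3 : ‖(fun _ : Fin 1 => x : Fin 1 → Fin m → ℝ)‖ = ‖x‖ := pi_norm_const _
      calc ‖Tb n x‖ = ‖(pimap 1 (Tb n)) (fun _ : Fin 1 => x)‖ := h2.symm
      _ ≤ ‖pimap 1 (Tb n)‖ * ‖(fun _ : Fin 1 => x : Fin 1 → Fin m → ℝ)‖ :=
          (pimap 1 (Tb n)).le_opNorm _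
      _ ≤ max C 0 * ‖x‖ := by
          rw [h3]
          exact mul_le_mul ((hC n).trans (le_max_left _ _)) le_rfl (norm_nonneg _)
            (le_trans (norm_nonneg _) ((hC n).trans (le_max_left _ _)))
    -- extract a convergent subsequence of the operators
    have hball : ∀ n, Tb n ∈ Metric.closedBall (0 : (Fin m → ℝ) →L[ℝ] (Fin m → ℝ)) (max C 0) := by
      intro n
      rw [Metric.mem_closedBall, dist_zero_right]
      exact hTbC n
    obtain ⟨Boo, _, ψ, hψmono, hψconv⟩ :=
      (isCompact_closedBall (0 : (Fin m → ℝ) →L[ℝ] (Fin m → ℝ)) (max C 0)).tendsto_subseq hball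
    refine ⟨Boo.toLinearMap, ?_⟩
    intro k t
    -- identify the limit along the subsequence
    have hκmeas : Measurable (fun ω => (pimap k Boo) (fun i => X (t i) ω)) :=
      (pimap k Boo).continuous.measurable.comp (hXt k t)
    have hρψ := (hρconv k t).comp hψmono.tendsto_atTop
    have hμψ := (hμconv k t).comp hψmono.tendsto_atTop
    have hTconv : Tendsto (fun j => pimap k (Tb (ψ j))) atTop (𝓝 (pimap k Boo)) := by
      have hcont : Continuous (pimap k (m := m)) :=
        LinearMap.continuous_of_finiteDimensional (pimap k)
      exact (hcont.tendsto _).comp hψconv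
    have hρψ2 : Tendsto (fun j => law P'
          (fun ω i => f ((ψ j:ℝ)/r)
            (Y ((NormedSpace.exp (Real.log (ψ j:ℝ) • E)).mulVec (t i)) ω))
          (hYg ((ψ j:ℝ)/r) k (fun i =>
            (NormedSpace.exp (Real.log (ψ j:ℝ) • E)).mulVec (t i))))
        atTop (𝓝 (law P (fun ω => (pimap k Boo) (fun i => X (t i) ω)) hκmeas)) := by
      rw [ProbabilityMeasure.tendsto_iff_forall_integral_tendsto]
      intro φ
      have hmain := aux_mapconv hμψ hTconv φ
      have hR : ∀ j, ∫ x, φ ((pimap k (Tb (ψ j))) x)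
            ∂((law P' (fun ω i => f ((ψ j:ℝ))
              (Y ((NormedSpace.exp (Real.log (ψ j:ℝ) • E)).mulVec (t i)) ω))
              (hYg ((ψ j:ℝ)) k (fun i =>
                (NormedSpace.exp (Real.log (ψ j:ℝ) • E)).mulVec (t i)))) : Measure _)
          = ∫ x, φ x ∂((law P'
              (fun ω i => f ((ψ j:ℝ)/r)
                (Y ((NormedSpace.exp (Real.log (ψ j:ℝ) • E)).mulVec (t i)) ω))
              (hYg ((ψ j:ℝ)/r) k (fun i =>
                (NormedSpace.exp (Real.log (ψ j:ℝ) • E)).mulVec (t i)))) : Measure _) := by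
        intro j
        rw [hpush k t (ψ j),
          integral_map (pimap k (Tb (ψ j))).continuous.measurable.aemeasurable
            φ.continuous.aestronglyMeasurable]
      have hL1 := law_integral P (fun ω i => X (t i) ω) (hXt k t)
        (φ.compContinuous ⟨_, (pimap k Boo).continuous⟩)
      have hL2 := law_integral P (fun ω => (pimap k Boo) (fun i => X (t i) ω)) hκmeas φ
      simp only [BoundedContinuousFunction.compContinuous_apply, ContinuousMap.coe_mk] at hL1
      rw [hL2, ← hL1]
      exact Tendsto.congr hR hmain
    -- uniqueness of weak limits
    have huniq := tendsto_nhds_unique hρψ hρψ2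
    have hmeq : ((law P
          (fun ω i => X ((NormedSpace.exp (Real.log r • E)).mulVec (t i)) ω)
          (hXt k (fun i => (NormedSpace.exp (Real.log r • E)).mulVec (t i)))) :
            Measure (Fin k → Fin m → ℝ))
        = ((law P (fun ω => (pimap k Boo) (fun i => X (t i) ω)) hκmeas) :
            Measure (Fin k → Fin m → ℝ)) := by
      rw [huniq]
    simp only [law_coe] at hmeq
    have hfun : (fun ω => (pimap k Boo) (fun i => X (t i) ω))
        = (fun ω i => Boo.toLinearMap (X (t i) ω)) := by
      funext ω
      funext i
      exact pimap_apply _ _ _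
    rw [hfun] at hmeq
    exact hmeq
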